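/- Let N ≥ 2 and let φ be an A_N-positive primitive automorphism of the free group F_N. If v ∈ F_N is a pure positive word in which every generator a ∈ A_N occurs, then for every integer h ∈ ℤ one has φ(v^h) ≠ v. (This is the case analysis on h < 0, h = 0, h > 0 at the heart of the paper's Proposition 1.2, stating that an A_N-positive primitive automorphism is not S-periodic.) -/

import Mathlib

/-- A word of the free group is pure positive if its reduced word is nonempty
and all its letters are positive. -/
def PurePos {N : ℕ} (v : FreeGroup (Fin N)) : Prop :=
  v.toWord ≠ [] ∧ ∀ l ∈ v.toWord, l.2 = true

/-- An automorphism of the free group is `A_N`-positive if the image of each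
generator is pure positive. -/
def IsPositive {N : ℕ} (φ : MulAut (FreeGroup (Fin N))) : Prop :=
  ∀ a : Fin N, PurePos (φ (FreeGroup.of a))

/-- An `A_N`-positive automorphism is primitive if some power sends each generator
to a word containing every positive letter. -/
def IsPrimitive {N : ℕ} (φ : MulAut (FreeGroup (Fin N))) : Prop :=
  ∃ k : ℕ, 1 ≤ k ∧ ∀ a b : Fin N, (b, true) ∈ ((φ ^ k) (FreeGroup.of a)).toWord

lemma reduce_pos {N : ℕ} (L : List (Fin N × Bool)) (h : ∀ l ∈ L, l.2 = true) :
    FreeGroup.reduce L = L := by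
  induction L with
  | nil => rfl
  | cons x xs ih =>
    rw [FreeGroup.reduce.cons, ih (fun l hl => h l (List.mem_cons_of_mem _ hl))]
    cases xs with
    | nil => rfl
    | cons y ys =>
      have hx : x.2 = true := h x (List.mem_cons_self)
      have hy : y.2 = true := h y (by simp)
      simp only [List.casesOn]
      rw [if_neg]
      rintro ⟨-, h2⟩
      rw [hx, hy] at h2
      simp at h2

lemma toWord_mul_pos {N : ℕ} (u w : FreeGroup (Fin N))
    (hu : ∀ l ∈ u.toWord, l.2 = true) (hw : ∀ l ∈ w.toWord, l.2 = true) :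
    (u * w).toWord = u.toWord ++ w.toWord := by
  conv_lhs => rw [← FreeGroup.mk_toWord (x := u), ← FreeGroup.mk_toWord (x := w)]
  rw [FreeGroup.mul_mk, FreeGroup.toWord_mk]
  apply reduce_pos
  intro l hl
  rcases List.mem_append.1 hl with h | h
  · exact hu l h
  · exact hw l h

/-- image of a positive word under a positive automorphism -/
lemma phi_mk_pos {N : ℕ} (φ : MulAut (FreeGroup (Fin N))) (hpos : IsPositive φ) :
    ∀ L : List (Fin N × Bool), (∀ l ∈ L, l.2 = true) →
      (φ (FreeGroup.mk L)).toWord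
        = (L.map fun l => (φ (FreeGroup.of l.1)).toWord).flatten := by
  intro L
  induction L with
  | nil =>
    intro _
    simp [FreeGroup.one_eq_mk.symm]
  | cons x xs ih =>
    intro h
    have hx : x.2 = true := h x (List.mem_cons_self)
    have hxs : ∀ l ∈ xs, l.2 = true := fun l hl => h l (List.mem_cons_of_mem _ hl)
    have hsplit : FreeGroup.mk (x :: xs) = FreeGroup.of x.1 * FreeGroup.mk xs := by
      rw [FreeGroup.of, FreeGroup.mul_mk]
      congr 1
      simp [← hx]
    rw [hsplit, map_mul]
    have h1 := hpos x.1
    have h2 : ∀ l ∈ (φ (FreeGroup.mk xs)).toWord, l.2 = true := by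
      intro l hl
      rw [ih hxs] at hl
      rcases List.mem_flatten.1 hl with ⟨w, hw, hlw⟩
      rcases List.mem_map.1 hw with ⟨y, _, rfl⟩
      exact (hpos y.1).2 l hlw
    rw [toWord_mul_pos _ _ h1.2 h2, ih hxs, List.map_cons, List.flatten_cons]

lemma phi_pos_toWord {N : ℕ} (φ : MulAut (FreeGroup (Fin N))) (hpos : IsPositive φ)
    (v : FreeGroup (Fin N)) (hv : ∀ l ∈ v.toWord, l.2 = true) :
    (φ v).toWord = (v.toWord.map fun l => (φ (FreeGroup.of l.1)).toWord).flatten := by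
  conv_lhs => rw [← FreeGroup.mk_toWord (x := v)]
  exact phi_mk_pos φ hpos v.toWord hv

lemma phi_pos_purePos {N : ℕ} (φ : MulAut (FreeGroup (Fin N))) (hpos : IsPositive φ)
    (v : FreeGroup (Fin N)) (hv : PurePos v) : PurePos (φ v) := by
  rw [PurePos, phi_pos_toWord φ hpos v hv.2]
  constructor
  · rcases List.exists_mem_of_ne_nil _ hv.1 with ⟨l, hl⟩
    intro hnil
    have : (φ (FreeGroup.of l.1)).toWord ∈
        (v.toWord.map fun l => (φ (FreeGroup.of l.1)).toWord) :=
      List.mem_map.2 ⟨l, hl, rfl⟩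
    have := (List.flatten_eq_nil_iff.1 hnil) _ this
    exact (hpos l.1).1 this
  · intro l hl
    rcases List.mem_flatten.1 hl with ⟨w, hw, hlw⟩
    rcases List.mem_map.1 hw with ⟨y, _, rfl⟩
    exact (hpos y.1).2 l hlw

lemma phi_pos_length {N : ℕ} (φ : MulAut (FreeGroup (Fin N))) (hpos : IsPositive φ)
    (v : FreeGroup (Fin N)) (hv : ∀ l ∈ v.toWord, l.2 = true) :
    v.toWord.length ≤ (φ v).toWord.length := by
  rw [phi_pos_toWord φ hpos v hv, List.length_flatten]
  calc v.toWord.length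
      = (v.toWord.map fun l => ((φ (FreeGroup.of l.1)).toWord).length).length := by
        simp
    _ ≤ (v.toWord.map fun l => ((φ (FreeGroup.of l.1)).toWord).length).sum := by
        apply List.length_le_sum_of_one_le
        intro i hi
        rcases List.mem_map.1 hi with ⟨y, _, rfl⟩
        exact Nat.one_le_iff_ne_zero.2 (by
          simpa [List.length_eq_zero_iff] using (hpos y.1).1)
    _ = (List.map List.length (v.toWord.map fun l => (φ (FreeGroup.of l.1)).toWord)).sum := by
        rw [List.map_map]; rfl

lemma pow_purePos {N : ℕ} (w : FreeGroup (Fin N)) (hw : PurePos w) :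
    ∀ n : ℕ, 1 ≤ n → PurePos (w ^ n) ∧ (w ^ n).toWord.length = n * w.toWord.length := by
  intro n hn
  induction n with
  | zero => omega
  | succ m ih =>
    rcases Nat.eq_or_lt_of_le hn with h1 | h1
    · simp only [← h1]
      simpa using hw
    · have hm : 1 ≤ m := by omega
      obtain ⟨hp, hl⟩ := ih hm
      have hmul : (w ^ (m + 1)).toWord = (w ^ m).toWord ++ w.toWord := by
        rw [pow_succ]
        exact toWord_mul_pos _ _ hp.2 hw.2
      refine ⟨⟨?_, ?_⟩, ?_⟩
      · rw [hmul]; simp [hp.1]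
      · rw [hmul]; intro l hl'
        rcases List.mem_append.1 hl' with h | h
        · exact hp.2 l h
        · exact hw.2 l h
      · rw [hmul, List.length_append, hl]; ring

lemma all_one_of_sum_eq_length : ∀ (l : List ℕ), (∀ i ∈ l, 1 ≤ i) →
    l.sum = l.length → ∀ i ∈ l, i = 1 := by
  intro l
  induction l with
  | nil => simp
  | cons x xs ih =>
    intro h1 hs i hi
    have hx : 1 ≤ x := h1 x (by simp)
    have hxs1 : ∀ i ∈ xs, 1 ≤ i := fun i hi => h1 i (by simp [hi])
    have hlen : xs.length ≤ xs.sum := List.length_le_sum_of_one_le _ hxs1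
    simp only [List.sum_cons, List.length_cons] at hs
    rcases List.mem_cons.1 hi with rfl | hi'
    · omega
    · exact ih hxs1 (by omega) i hi'

/-- If all images of generators are single letters, primitivity fails. -/
lemma prim_contra {N : ℕ} (hN : 2 ≤ N) (φ : MulAut (FreeGroup (Fin N)))
    (hpos : IsPositive φ) (hprim : IsPrimitive φ)
    (h1 : ∀ a : Fin N, (φ (FreeGroup.of a)).toWord.length = 1) : False := by
  have hsingle : ∀ a : Fin N, ∃ b : Fin N, φ (FreeGroup.of a) = FreeGroup.of b := by
    intro a
    have hlen := h1 a
    rcases List.length_eq_one_iff.1 hlen with ⟨l, hl⟩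
    have hpos' : l.2 = true := (hpos a).2 l (by rw [hl]; simp)
    refine ⟨l.1, ?_⟩
    apply FreeGroup.toWord_injective
    rw [hl, FreeGroup.toWord_of]
    cases l
    simp_all
  have hiter : ∀ k : ℕ, ∀ a : Fin N, ∃ b : Fin N,
      (φ ^ k) (FreeGroup.of a) = FreeGroup.of b := by
    intro k
    induction k with
    | zero => intro a; exact ⟨a, rfl⟩
    | succ m ih =>
      intro a
      obtain ⟨b, hb⟩ := ih a
      obtain ⟨c, hc⟩ := hsingle b
      refine ⟨c, ?_⟩
      rw [pow_succ', MulAut.mul_apply, hb, hc]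
  obtain ⟨k, -, hk⟩ := hprim
  obtain ⟨b, hb⟩ := hiter k ⟨0, by omega⟩
  have h0 := hk ⟨0, by omega⟩ ⟨0, by omega⟩
  have h1' := hk ⟨0, by omega⟩ ⟨1, by omega⟩
  rw [hb, FreeGroup.toWord_of] at h0 h1'
  simp only [List.mem_singleton, Prod.mk.injEq, Fin.ext_iff] at h0 h1'
  omega

/-- If `v` is a pure positive word containing all the generators, then for every
integer `h` we have `φ(vʰ) ≠ v`. -/
theorem apply_zpow_ne {N : ℕ} (hN : 2 ≤ N)
    (φ : MulAut (FreeGroup (Fin N))) (hpos : IsPositive φ) (hprim : IsPrimitive φ)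
    (v : FreeGroup (Fin N)) (hv : PurePos v)
    (hall : ∀ a : Fin N, (a, true) ∈ v.toWord) :
    ∀ h : ℤ, φ (v ^ h) ≠ v := by
  intro h heq
  have hφv : PurePos (φ v) := phi_pos_purePos φ hpos v hv
  rcases lt_trichotomy h 0 with hlt | h0 | hgt
  · -- negative case
    obtain ⟨n, hn, rfl⟩ : ∃ n : ℕ, 1 ≤ n ∧ h = -(n : ℤ) := by
      refine ⟨h.natAbs, by omega, by omega⟩
    rw [zpow_neg, zpow_natCast, map_inv, map_pow] at heq
    have hp := (pow_purePos (φ v) hφv n hn).1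
    rcases List.exists_mem_of_ne_nil _ hv.1 with ⟨l, hl⟩
    have hlpos : l.2 = true := hv.2 l hl
    rw [← heq, FreeGroup.toWord_inv, FreeGroup.invRev] at hl
    rcases List.mem_map.1 (List.mem_reverse.1 hl) with ⟨y, hy, hyl⟩
    have : l.2 = !y.2 := by rw [← hyl]
    rw [hp.2 y hy] at this
    rw [hlpos] at this
    simp at this
  · rw [h0] at heq
    simp only [zpow_zero, map_one] at heq
    exact hv.1 (heq ▸ FreeGroup.toWord_one)
  · -- positive case
    obtain ⟨n, hn, rfl⟩ : ∃ n : ℕ, 1 ≤ n ∧ h = (n : ℤ) := by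
      refine ⟨h.natAbs, by omega, by omega⟩
    rw [zpow_natCast, map_pow] at heq
    have hlen := (pow_purePos (φ v) hφv n hn).2
    have hge : v.toWord.length ≤ (φ v).toWord.length := phi_pos_length φ hpos v hv.2
    have hvlen : 1 ≤ v.toWord.length := by
      rcases List.exists_mem_of_ne_nil _ hv.1 with ⟨l, hl⟩
      exact List.length_pos_iff.2 hv.1
    have heqlen : n * (φ v).toWord.length = v.toWord.length := by
      rw [← hlen, heq]
    have hn1 : n = 1 ∧ (φ v).toWord.length = v.toWord.length := by
      constructor <;> nlinarith
    -- each generator image has length 1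
    have hsum : (φ v).toWord.length
        = (v.toWord.map fun l => ((φ (FreeGroup.of l.1)).toWord).length).sum := by
      rw [phi_pos_toWord φ hpos v hv.2, List.length_flatten, List.map_map]; rfl
    have hlb : ∀ i ∈ (v.toWord.map fun l => ((φ (FreeGroup.of l.1)).toWord).length),
        1 ≤ i := by
      intro i hi
      rcases List.mem_map.1 hi with ⟨y, _, rfl⟩
      have := (hpos y.1).1
      have : (φ (FreeGroup.of y.1)).toWord.length ≠ 0 := by
        simpa [List.length_eq_zero_iff] using this
      omega
    have hseq : (v.toWord.map fun l => ((φ (FreeGroup.of l.1)).toWord).length).sum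
        = (v.toWord.map fun l => ((φ (FreeGroup.of l.1)).toWord).length).length := by
      rw [← hsum, hn1.2, List.length_map]
    have hall1 : ∀ a : Fin N, (φ (FreeGroup.of a)).toWord.length = 1 := by
      intro a
      exact all_one_of_sum_eq_length _ hlb hseq _
        (List.mem_map.2 ⟨(a, true), hall a, rfl⟩)
    exact prim_contra hN φ hpos hprim hall1
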